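/- Let ρ be a qubit density matrix with Bloch vector r ∈ ℝ³, r_i = Tr(ρ·σ_i). Then the second-order moment under Haar-random unitaries satisfies ∫_{U(2)} (Re Tr(ρ · U σ₃ U†))² dμ(U) = ‖r‖²/3, where μ is the Haar probability measure on the compact group U(2) of 2×2 complex unitary matrices. -/

import Mathlib

open Matrix Complex BigOperators MeasureTheory
open scoped ComplexOrder

/-- The three Pauli matrices σ₁, σ₂, σ₃ (indexed by `Fin 3`). -/
noncomputable def pauli : Fin 3 → Matrix (Fin 2) (Fin 2) ℂ
  | 0 => !![0, 1; 1, 0]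
  | 1 => !![0, -Complex.I; Complex.I, 0]
  | 2 => !![1, 0; 0, -1]

/-- Bloch vector component `r_i = Tr (ρ σ_i)`. -/
noncomputable def bloch (ρ : Matrix (Fin 2) (Fin 2) ℂ) (i : Fin 3) : ℝ :=
  ((ρ * pauli i).trace).re

/-- The Borel σ-algebra on the unitary group U(2). -/
noncomputable instance : MeasurableSpace (Matrix.unitaryGroup (Fin 2) ℂ) := borel _

instance : BorelSpace (Matrix.unitaryGroup (Fin 2) ℂ) := ⟨rfl⟩

lemma pauli_herm (i : Fin 3) : (pauli i)ᴴ = pauli i := by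
  fin_cases i <;> ext a b <;> fin_cases a <;> fin_cases b <;>
    simp [pauli, conjTranspose_apply]

lemma pauli_sq (i : Fin 3) : pauli i * pauli i = 1 := by
  fin_cases i <;> ext a b <;> fin_cases a <;> fin_cases b <;>
    simp [pauli, mul_apply, Fin.sum_univ_two, one_apply]

lemma herm_entries (A : Matrix (Fin 2) (Fin 2) ℂ) (hA : Aᴴ = A) :
    (A 1 0).re = (A 0 1).re ∧ (A 1 0).im = -(A 0 1).im ∧ (A 0 0).im = 0 ∧ (A 1 1).im = 0 := by
  have h10 : A 1 0 = starRingEnd ℂ (A 0 1) := by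
    conv_lhs => rw [← hA]; simp [conjTranspose_apply]
  have h00 : starRingEnd ℂ (A 0 0) = A 0 0 := by
    conv_rhs => rw [← hA]; simp [conjTranspose_apply]
  have h11 : starRingEnd ℂ (A 1 1) = A 1 1 := by
    conv_rhs => rw [← hA]; simp [conjTranspose_apply]
  refine ⟨by rw [h10]; simp, by rw [h10]; simp, ?_, ?_⟩
  · simpa [Complex.conj_eq_iff_im] using h00
  · simpa [Complex.conj_eq_iff_im] using h11

lemma key_decomp (ρ H : Matrix (Fin 2) (Fin 2) ℂ) (hρ : ρᴴ = ρ) (hH : Hᴴ = H)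
    (h0 : H.trace = 0) :
    ((ρ * H).trace).re = ∑ i, bloch ρ i * (((pauli i * H).trace).re / 2) := by
  obtain ⟨hr1, hr2, hr3, hr4⟩ := herm_entries ρ hρ
  obtain ⟨hh1, hh2, hh3, _⟩ := herm_entries H hH
  have h11 : H 1 1 = -H 0 0 := by
    have := h0; rw [trace_fin_two] at this; linear_combination this
  have h11re : (H 1 1).re = -(H 0 0).re := by rw [h11]; simp
  have h11im : (H 1 1).im = 0 := by rw [h11]; simp [hh3]
  simp only [bloch, trace_fin_two, mul_apply, Fin.sum_univ_two, Fin.sum_univ_three, pauli]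
  simp [hr1, hr2, hr3, hr4, hh1, hh2, hh3, h11re, h11im]
  ring

lemma key_sum (H : Matrix (Fin 2) (Fin 2) ℂ) (hH : Hᴴ = H) (h0 : H.trace = 0)
    (hd : H.det = -1) :
    ∑ i, (((pauli i * H).trace).re / 2) ^ 2 = 1 := by
  obtain ⟨hh1, hh2, hh3, _⟩ := herm_entries H hH
  have h11 : H 1 1 = -H 0 0 := by
    have := h0; rw [trace_fin_two] at this; linear_combination this
  have h11re : (H 1 1).re = -(H 0 0).re := by rw [h11]; simp
  have h11im : (H 1 1).im = 0 := by rw [h11]; simp [hh3]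
  have hdr : (H.det).re = -1 := by rw [hd]; simp
  rw [det_fin_two] at hdr
  simp only [Complex.sub_re, Complex.mul_re] at hdr
  rw [hh1, hh2, hh3, h11re, h11im] at hdr
  simp only [trace_fin_two, mul_apply, Fin.sum_univ_two, Fin.sum_univ_three, pauli]
  simp [hh1, hh2, hh3, h11re, h11im]
  nlinarith [hdr]

abbrev UG := Matrix.unitaryGroup (Fin 2) ℂ

noncomputable def Hm (U : UG) : Matrix (Fin 2) (Fin 2) ℂ :=
  (U : Matrix (Fin 2) (Fin 2) ℂ) * pauli 2 * (U : Matrix (Fin 2) (Fin 2) ℂ)ᴴ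

noncomputable def nn (U : UG) (i : Fin 3) : ℝ := ((pauli i * Hm U).trace).re / 2

lemma star_coe (U : UG) : star (U : Matrix (Fin 2) (Fin 2) ℂ) = (U : Matrix (Fin 2) (Fin 2) ℂ)ᴴ := rfl

lemma Hm_herm (U : UG) : (Hm U)ᴴ = Hm U := by
  simp [Hm, conjTranspose_mul, pauli_herm, mul_assoc]

lemma Hm_trace (U : UG) : (Hm U).trace = 0 := by
  rw [Hm, trace_mul_cycle, ← star_coe, U.2.1, one_mul]
  simp [pauli, trace_fin_two]

lemma Hm_det (U : UG) : (Hm U).det = -1 := by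
  have h1 : ((U : Matrix (Fin 2) (Fin 2) ℂ)ᴴ).det * (U : Matrix (Fin 2) (Fin 2) ℂ).det = 1 := by
    rw [← det_mul, ← star_coe, U.2.1, det_one]
  have h2 : (pauli 2).det = -1 := by simp [pauli, det_fin_two]
  rw [Hm, det_mul, det_mul, h2]
  linear_combination -h1

lemma Hm_mul (v U : UG) :
    Hm (v * U) = (v : Matrix (Fin 2) (Fin 2) ℂ) * Hm U * (v : Matrix (Fin 2) (Fin 2) ℂ)ᴴ := by
  simp only [Hm, Matrix.UnitaryGroup.mul_val, conjTranspose_mul, mul_assoc]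

lemma nn_mul (v U : UG) (i : Fin 3) :
    nn (v * U) i =
      (((v : Matrix (Fin 2) (Fin 2) ℂ)ᴴ * pauli i * (v : Matrix (Fin 2) (Fin 2) ℂ) * Hm U).trace).re / 2 := by
  rw [nn, Hm_mul]
  congr 2
  rw [show pauli i * ((v : Matrix (Fin 2) (Fin 2) ℂ) * Hm U * (v : Matrix (Fin 2) (Fin 2) ℂ)ᴴ)
      = pauli i * (v : Matrix (Fin 2) (Fin 2) ℂ) * Hm U * (v : Matrix (Fin 2) (Fin 2) ℂ)ᴴ by
    simp [mul_assoc]]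
  rw [trace_mul_cycle]
  simp [mul_assoc]

noncomputable def pu (i : Fin 3) : UG :=
  ⟨pauli i, by
    constructor <;>
      simp [Matrix.star_eq_conjTranspose, pauli_herm, pauli_sq]⟩

lemma pauli_conj (i j : Fin 3) (h : i ≠ j) : pauli i * pauli j * pauli i = -pauli j := by
  fin_cases i <;> fin_cases j <;> first
    | exact absurd rfl h
    | (ext a b <;> fin_cases a <;> fin_cases b <;>
        simp [pauli, mul_apply, Fin.sum_univ_two])

lemma nn_pu_ne (i j : Fin 3) (h : i ≠ j) (U : UG) : nn (pu i * U) j = - nn U j := by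
  rw [nn_mul]
  have : ((pu i : Matrix (Fin 2) (Fin 2) ℂ)ᴴ) = pauli i := pauli_herm i
  rw [this]
  show ((pauli i * pauli j * pauli i * Hm U).trace).re / 2 = _
  rw [pauli_conj i j (by exact fun hh => h hh), neg_mul, trace_neg]
  simp [nn, neg_div]

lemma nn_pu_self (i : Fin 3) (U : UG) : nn (pu i * U) i = nn U i := by
  rw [nn_mul]
  have : ((pu i : Matrix (Fin 2) (Fin 2) ℂ)ᴴ) = pauli i := pauli_herm i
  rw [this]
  show ((pauli i * pauli i * pauli i * Hm U).trace).re / 2 = _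
  rw [pauli_sq, one_mul, nn]

noncomputable def sq2 : ℝ := Real.sqrt 2 / 2

lemma sq2_sq : sq2 * sq2 = 1 / 2 := by
  rw [sq2]
  rw [div_mul_div_comm, Real.mul_self_sqrt (by norm_num)]
  norm_num

noncomputable def hadam : Matrix (Fin 2) (Fin 2) ℂ := !![(sq2:ℂ), sq2; sq2, -sq2]

lemma hadam_herm : hadamᴴ = hadam := by
  ext a b; fin_cases a <;> fin_cases b <;>
    simp [hadam, conjTranspose_apply, Complex.conj_ofReal]

lemma sq2C : (sq2 : ℂ) * sq2 = 1 / 2 := by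
  rw [← Complex.ofReal_mul, sq2_sq]; norm_num

lemma sq2C_pow : (sq2 : ℂ) ^ 2 = 1 / 2 := by rw [sq, sq2C]

lemma I_pow_three : Complex.I ^ 3 = -Complex.I := by
  rw [pow_succ, Complex.I_sq]; ring

lemma hadam_sq : hadam * hadam = 1 := by
  ext a b; fin_cases a <;> fin_cases b <;>
    simp [hadam, mul_apply, Fin.sum_univ_two, one_apply] <;>
    ring_nf <;> rw [sq2C_pow] <;> norm_num

noncomputable def vH : UG :=
  ⟨hadam, by constructor <;> simp [Matrix.star_eq_conjTranspose, hadam_herm, hadam_sq]⟩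

lemma hadam_conj : hadamᴴ * pauli 0 * hadam = pauli 2 := by
  rw [hadam_herm]
  ext a b; fin_cases a <;> fin_cases b <;>
    simp [hadam, pauli, mul_apply, Fin.sum_univ_two] <;> ring_nf <;>
    simp [sq2C_pow, _root_.I_pow_three] <;> norm_num

lemma nn_vH (U : UG) : nn (vH * U) 0 = nn U 2 := by
  rw [nn_mul]
  show ((hadamᴴ * pauli 0 * hadam * Hm U).trace).re / 2 = _
  rw [hadam_conj, nn]

noncomputable def qmat : Matrix (Fin 2) (Fin 2) ℂ :=
  !![(sq2:ℂ), sq2 * Complex.I; sq2 * Complex.I, sq2]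

lemma qmat_conjT : qmatᴴ = !![(sq2:ℂ), -(sq2 * Complex.I); -(sq2 * Complex.I), sq2] := by
  ext a b; fin_cases a <;> fin_cases b <;>
    simp [qmat, conjTranspose_apply, Complex.conj_ofReal]

lemma qmat_unitary : qmatᴴ * qmat = 1 ∧ qmat * qmatᴴ = 1 := by
  rw [qmat_conjT]
  constructor <;>
    (ext a b; fin_cases a <;> fin_cases b <;>
      simp [qmat, mul_apply, Fin.sum_univ_two, one_apply] <;> ring_nf <;>
      simp [sq2C_pow, _root_.I_pow_three, Complex.I_sq] <;> ring_nf <;> norm_num [sq2C_pow])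

noncomputable def v2 : UG :=
  ⟨qmat, by
    constructor <;> rw [Matrix.star_eq_conjTranspose] <;>
      [exact qmat_unitary.1; exact qmat_unitary.2]⟩

lemma qmat_conj : qmatᴴ * pauli 1 * qmat = pauli 2 := by
  rw [qmat_conjT]
  ext a b; fin_cases a <;> fin_cases b <;>
    simp [qmat, pauli, mul_apply, Fin.sum_univ_two] <;> ring_nf <;>
    simp [sq2C_pow, _root_.I_pow_three, Complex.I_sq] <;> ring_nf <;> norm_num [sq2C_pow]

lemma nn_v2 (U : UG) : nn (v2 * U) 1 = nn U 2 := by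
  rw [nn_mul]
  show ((qmatᴴ * pauli 1 * qmat * Hm U).trace).re / 2 = _
  rw [qmat_conj, nn]

lemma nn_cont (i : Fin 3) : Continuous fun U : UG => nn U i := by
  have h1 : Continuous fun U : UG => (U : Matrix (Fin 2) (Fin 2) ℂ) := continuous_subtype_val
  exact (Complex.continuous_re.comp
    ((continuous_const.matrix_mul (((h1.matrix_mul continuous_const).matrix_mul
      h1.matrix_conjTranspose))).matrix_trace)).div_const 2

instance : MeasurableMul UG := by
  constructor
  · intro c
    apply Continuous.measurable
    exact Continuous.subtype_mk
      (continuous_const.matrix_mul continuous_subtype_val) _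
  · intro c
    apply Continuous.measurable
    exact Continuous.subtype_mk
      (continuous_subtype_val.matrix_mul continuous_const) _

lemma sum_sq_nn (U : UG) : ∑ i, nn U i ^ 2 = 1 := by
  rw [show (fun i => nn U i ^ 2) = fun i => (((pauli i * Hm U).trace).re / 2) ^ 2 from rfl]
  exact key_sum (Hm U) (Hm_herm U) (Hm_trace U) (Hm_det U)

lemma nn_bdd (U : UG) (i : Fin 3) : |nn U i| ≤ 1 := by
  have h := sum_sq_nn U
  have hle : nn U i ^ 2 ≤ ∑ j, nn U j ^ 2 :=
    Finset.single_le_sum (fun j _ => sq_nonneg (nn U j)) (Finset.mem_univ i)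
  rw [h] at hle
  nlinarith [abs_nonneg (nn U i), _root_.sq_abs (nn U i)]

variable (μ : Measure UG) [μ.IsHaarMeasure] [IsProbabilityMeasure μ]

lemma nn_integrable (i j : Fin 3) : Integrable (fun U => nn U i * nn U j) μ := by
  refine Integrable.mono' (integrable_const 1)
    (((nn_cont i).mul (nn_cont j)).measurable.aestronglyMeasurable) ?_
  filter_upwards with U
  rw [Real.norm_eq_abs, abs_mul]
  calc |nn U i| * |nn U j| ≤ 1 * 1 :=
        mul_le_mul (nn_bdd U i) (nn_bdd U j) (abs_nonneg _) zero_le_one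
    _ = 1 := by norm_num

lemma int_cross (i j : Fin 3) (h : i ≠ j) : ∫ U, nn U i * nn U j ∂μ = 0 := by
  have key := integral_mul_left_eq_self (μ := μ) (fun U => nn U i * nn U j) (pu i)
  have : (fun U : UG => nn (pu i * U) i * nn (pu i * U) j)
      = fun U : UG => -(nn U i * nn U j) := by
    funext U; rw [nn_pu_self, nn_pu_ne i j h]; ring
  rw [this, integral_neg] at key
  linarith [key]

lemma int_diag (i : Fin 3) : ∫ U, nn U i * nn U i ∂μ = ∫ U, nn U 2 * nn U 2 ∂μ := by
  have h0 : ∫ U, nn U 0 * nn U 0 ∂μ = ∫ U, nn U 2 * nn U 2 ∂μ := by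
    have key := integral_mul_left_eq_self (μ := μ) (fun U => nn U 0 * nn U 0) vH
    rw [← key]; congr 1; funext U; rw [nn_vH]
  have h1 : ∫ U, nn U 1 * nn U 1 ∂μ = ∫ U, nn U 2 * nn U 2 ∂μ := by
    have key := integral_mul_left_eq_self (μ := μ) (fun U => nn U 1 * nn U 1) v2
    rw [← key]; congr 1; funext U; rw [nn_v2]
  fin_cases i
  · exact h0
  · exact h1
  · rfl

lemma int_diag_val (i : Fin 3) : ∫ U, nn U i * nn U i ∂μ = 1 / 3 := by
  have hsum : ∑ j : Fin 3, ∫ U, nn U j * nn U j ∂μ = 1 := by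
    rw [← integral_finset_sum _ (fun j _ => nn_integrable μ j j)]
    have : (fun U : UG => ∑ j : Fin 3, nn U j * nn U j) = fun _ => (1:ℝ) := by
      funext U
      have := sum_sq_nn U
      simpa [sq] using this
    rw [this]
    simp
  rw [Fin.sum_univ_three, int_diag μ 0, int_diag μ 1] at hsum
  rw [int_diag μ i]
  linarith

lemma int_nn (i j : Fin 3) : ∫ U, nn U i * nn U j ∂μ = if i = j then 1/3 else 0 := by
  by_cases h : i = j
  · subst h; simp [int_diag_val μ i]
  · simp [h, int_cross μ i j h]

/-- For a qubit density matrix ρ with Bloch vector r, the second-order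
moment under Haar-random unitaries satisfies
`∫_{U(2)} (Re Tr(ρ · U σ₃ U†))² dμ(U) = ‖r‖²/3`,
where μ is the Haar probability measure on the compact group U(2). -/
theorem second_moment_haar (ρ : Matrix (Fin 2) (Fin 2) ℂ)
    (hpos : ρ.PosSemidef) (htr : ρ.trace = 1)
    (μ : Measure (Matrix.unitaryGroup (Fin 2) ℂ))
    [μ.IsHaarMeasure] [IsProbabilityMeasure μ] :
    ∫ U : Matrix.unitaryGroup (Fin 2) ℂ,
        ((ρ * ((U : Matrix (Fin 2) (Fin 2) ℂ) * pauli 2 *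
          (U : Matrix (Fin 2) (Fin 2) ℂ)ᴴ)).trace).re ^ 2 ∂μ
      = (∑ i, (bloch ρ i) ^ 2) / 3 := by
  have hρ : ρᴴ = ρ := hpos.1
  have hpt : ∀ U : UG, ((ρ * Hm U).trace).re = ∑ i, bloch ρ i * nn U i := fun U =>
    key_decomp ρ (Hm U) hρ (Hm_herm U) (Hm_trace U)
  have step1 : (fun U : UG => ((ρ * ((U : Matrix (Fin 2) (Fin 2) ℂ) * pauli 2 *
          (U : Matrix (Fin 2) (Fin 2) ℂ)ᴴ)).trace).re ^ 2)
      = fun U : UG => ∑ i, ∑ j, (bloch ρ i * bloch ρ j) * (nn U i * nn U j) := by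
    funext U
    rw [show ((ρ * ((U : Matrix (Fin 2) (Fin 2) ℂ) * pauli 2 *
          (U : Matrix (Fin 2) (Fin 2) ℂ)ᴴ)).trace).re = ((ρ * Hm U).trace).re from rfl, hpt U]
    rw [Fin.sum_univ_three, Fin.sum_univ_three, Fin.sum_univ_three, Fin.sum_univ_three,
      Fin.sum_univ_three]
    ring
  rw [step1]
  rw [integral_finset_sum _ (fun i _ => by
    exact integrable_finset_sum _ (fun j _ => (nn_integrable μ i j).const_mul _))]
  have step2 : ∀ i : Fin 3, ∫ U, ∑ j, (bloch ρ i * bloch ρ j) * (nn U i * nn U j) ∂μ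
      = ∑ j, (bloch ρ i * bloch ρ j) * ∫ U, nn U i * nn U j ∂μ := by
    intro i
    rw [integral_finset_sum _ (fun j _ => (nn_integrable μ i j).const_mul _)]
    exact Finset.sum_congr rfl fun j _ => integral_const_mul _ _
  simp_rw [step2, int_nn μ]
  simp only [mul_ite, mul_zero, Finset.sum_ite_eq, Finset.mem_univ, if_true]
  rw [Finset.sum_div]
  exact Finset.sum_congr rfl fun i _ => by ring
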